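/- Let (A, ‖·‖) be a non-unital normed algebra with regular norm ‖·‖. If the operator norm ‖·‖_op on the unitization A_e is a Q-norm (i.e. r_{A_e}(x) ≤ ‖x‖_op for all x ∈ A_e), then 0 ∈ closure(convexHull(V_A(a))) for every a ∈ A. -/

import Mathlib

/-- The spatial numerical range of `a` in a normed algebra `A` with norm `q`:
`{φ(ax) : ‖x‖ = 1, ‖φ‖ = 1, φ(x) = 1}`. -/
def spatialNR {A : Type*} [NonUnitalNonAssocRing A] [Module ℂ A]
    (q : A → ℝ) (a : A) : Set ℂ :=
  {z | ∃ (x : A) (φ : A →ₗ[ℂ] ℂ),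
    q x = 1 ∧ (∀ y : A, ‖φ y‖ ≤ q y) ∧ φ x = 1 ∧ φ (a * x) = z}

/-- The operator norm on the unitization `A_e` induced by the norm of `A`:
`‖a + λ1‖_op = sup {‖ax + λx‖ : ‖x‖ ≤ 1}`. -/
noncomputable def opU {A : Type*} [NonUnitalNormedRing A] [NormedSpace ℂ A]
    [IsScalarTower ℂ A A] [SMulCommClass ℂ A A] (z : Unitization ℂ A) : ℝ :=
  sSup {r : ℝ | ∃ x : A, ‖x‖ ≤ 1 ∧ r = ‖z.snd * x + z.fst • x‖}

set_option maxHeartbeats 1000000 in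
/-- If `(A, ‖·‖)` is a non-unital normed algebra with regular norm and the operator
norm on the unitization `A_e` is a Q-norm (the spectral radius is dominated by it),
then `0 ∈ closure (convexHull (V_A a))` for every `a ∈ A`. -/
theorem zero_mem_numericalRange_of_opNorm_QNorm
    (A : Type*) [NonUnitalNormedRing A] [NormedSpace ℂ A]
    [IsScalarTower ℂ A A] [SMulCommClass ℂ A A]
    (hA : ¬ ∃ e : A, ∀ x : A, e * x = x ∧ x * e = x)
    (hreg : ∀ a : A, ‖a‖ = sSup {r : ℝ | ∃ x : A, ‖x‖ ≤ 1 ∧ r = ‖a * x‖})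
    (hQ : ∀ z : Unitization ℂ A,
      (⨆ k ∈ spectrum ℂ z, (‖k‖₊ : ENNReal)) ≤ ENNReal.ofReal (opU z)) :
    ∀ a : A, (0 : ℂ) ∈ closure (convexHull ℝ (spatialNR (‖·‖) a)) := by
  intro a
  by_contra h0
  -- Hahn–Banach separation of `0` from the closed convex set
  obtain ⟨f, u, hfu, hu0⟩ := geometric_hahn_banach_closed_point
    ((convex_convexHull ℝ (spatialNR (‖·‖) a)).closure) isClosed_closure h0
  rw [map_zero] at hu0
  set c : ℝ := -u with hc
  have hcpos : 0 < c := by simp only [hc]; linarith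
  -- represent `-f` as `z ↦ (u₀ * z).re`
  have hfrep : ∀ z : ℂ, f z = z.re * f 1 + z.im * f Complex.I := by
    intro z
    have h : z = z.re • (1:ℂ) + z.im • Complex.I := by
      simp [Complex.real_smul, Complex.ext_iff]
    conv_lhs => rw [h]
    rw [map_add, map_smul, map_smul]
    simp [smul_eq_mul]
  set u₀ : ℂ := ⟨-(f 1), f Complex.I⟩ with hu₀
  have hre : ∀ z : ℂ, (u₀ * z).re = -(f z) := by
    intro z
    rw [hfrep z, Complex.mul_re]
    simp only [hu₀]
    ring
  set b : A := ((((c:ℝ)⁻¹ : ℝ) : ℂ) * u₀) • a with hb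
  -- every exact pair `(w, h)` satisfies `Re h(bw) ≥ 1`
  have hpair : ∀ (w : A) (h : A →L[ℂ] ℂ), ‖w‖ = 1 → ‖h‖ = 1 → h w = 1 →
      1 ≤ (h (b * w)).re := by
    intro w h hw hh hhw
    have hmem : h (a * w) ∈ spatialNR (‖·‖) a := by
      refine ⟨w, h.toLinearMap, hw, fun y => ?_, hhw, rfl⟩
      calc ‖h y‖ ≤ ‖h‖ * ‖y‖ := h.le_opNorm y
        _ = ‖y‖ := by rw [hh, one_mul]
    have hlt : f (h (a * w)) < u :=
      hfu _ (subset_closure (subset_convexHull ℝ _ hmem))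
    have hb1 : b * w = ((((c:ℝ)⁻¹ : ℝ) : ℂ) * u₀) • (a * w) := by
      rw [hb]; exact smul_mul_assoc _ _ _
    rw [hb1, map_smul]
    have hre1 : (((((c:ℝ)⁻¹ : ℝ) : ℂ) * u₀) • (h (a * w))).re
        = (c:ℝ)⁻¹ * (u₀ * h (a * w)).re := by
      rw [smul_eq_mul, mul_assoc]; simp
    rw [hre1, hre]
    have hge : c ≤ -(f (h (a * w))) := by simp only [hc]; linarith
    calc (1:ℝ) = (c:ℝ)⁻¹ * c := (inv_mul_cancel₀ (ne_of_gt hcpos)).symm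
      _ ≤ (c:ℝ)⁻¹ * -(f (h (a * w))) :=
        mul_le_mul_of_nonneg_left hge (inv_nonneg.mpr hcpos.le)
  set K : ℝ := ‖b‖ with hK
  have hK0 : 0 ≤ K := norm_nonneg b
  set α : ℝ := (2*(2+K^2))⁻¹ with hα
  have hαpos : 0 < α := by rw [hα]; positivity
  have e1 : α * (2*(2+K^2)) = 1 := by
    rw [hα]; exact inv_mul_cancel₀ (by positivity)
  have hα4 : α ≤ 1/4 := by
    nlinarith [mul_nonneg hαpos.le (sq_nonneg K)]
  -- the Q-norm hypothesis applied to `1 - α b`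
  set z : Unitization ℂ A := (1 : Unitization ℂ A) - Unitization.inr ((α:ℂ) • b) with hz
  have hzsnd : z.snd = -((α:ℂ) • b) := by
    simp [hz, sub_eq_add_neg, Unitization.snd_add, Unitization.snd_neg,
      Unitization.snd_one, Unitization.snd_inr]
  have hzfst : z.fst = 1 := by
    simp [hz, sub_eq_add_neg, Unitization.fst_add, Unitization.fst_neg,
      Unitization.fst_one, Unitization.fst_inr]
  have hspec : (1:ℂ) ∈ spectrum ℂ z := by
    rw [spectrum.mem_iff]
    intro hunit
    have hzz : (algebraMap ℂ (Unitization ℂ A)) 1 - z = Unitization.inr ((α:ℂ) • b) := by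
      rw [map_one, hz, sub_sub_cancel]
    rw [hzz] at hunit
    have h2 := hunit.map (Unitization.fstHom ℂ A)
    simp at h2
  have hop' : 1 ≤ sSup {r : ℝ | ∃ x : A, ‖x‖ ≤ 1 ∧ r = ‖z.snd * x + z.fst • x‖} := by
    have h2 : (1:ENNReal) ≤ ⨆ k ∈ spectrum ℂ z, (‖k‖₊ : ENNReal) := by
      have h3 := le_iSup₂ (f := fun (k:ℂ) (_ : k ∈ spectrum ℂ z) => ((‖k‖₊ : ENNReal))) (1:ℂ) hspec
      simpa using h3
    exact ENNReal.one_le_ofReal.mp (h2.trans (hQ z))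
  have hlt2 : 1 - α^2 < sSup {r : ℝ | ∃ x : A, ‖x‖ ≤ 1 ∧ r = ‖z.snd * x + z.fst • x‖} := by
    have : 0 < α^2 := by positivity
    linarith
  have hne : ({r : ℝ | ∃ x : A, ‖x‖ ≤ 1 ∧ r = ‖z.snd * x + z.fst • x‖}).Nonempty :=
    ⟨0, 0, by simp, by simp⟩
  obtain ⟨r, hrmem, hrgt⟩ := exists_lt_of_lt_csSup hne hlt2
  obtain ⟨x, hx1, hr⟩ := hrmem
  set x' : A := x - (α:ℂ) • (b * x) with hx'
  have hcomp : z.snd * x + z.fst • x = x' := by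
    rw [hzsnd, hzfst, one_smul, neg_mul, smul_mul_assoc, hx']
    exact neg_add_eq_sub _ _
  rw [hr, hcomp] at hrgt
  have hρpos : 0 < ‖x'‖ := by nlinarith
  obtain ⟨h, hh1, hhx0⟩ := exists_dual_vector ℂ x' hρpos.ne'
  have hhx' : h x' = ((‖x'‖ : ℝ) : ℂ) := hhx0
  set w : A := ((‖x'‖⁻¹ : ℝ) : ℂ) • x' with hw
  have hw1 : ‖w‖ = 1 := by
    rw [hw, norm_smul, Complex.norm_real, Real.norm_eq_abs,
      abs_of_pos (inv_pos.mpr hρpos), inv_mul_cancel₀ (ne_of_gt hρpos)]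
  have hhw : h w = 1 := by
    rw [hw, map_smul, hhx', smul_eq_mul, ← Complex.ofReal_mul,
      inv_mul_cancel₀ (ne_of_gt hρpos), Complex.ofReal_one]
  have hkey := hpair w h hw1 hh1 hhw
  have hbw2 : b * w = ((‖x'‖⁻¹ : ℝ) : ℂ) • (b * x') := by
    rw [hw]; exact mul_smul_comm _ _ _
  rw [hbw2, map_smul] at hkey
  have hre1 : (((‖x'‖⁻¹ : ℝ) : ℂ) • h (b * x')).re = ‖x'‖⁻¹ * (h (b * x')).re := by
    rw [smul_eq_mul]; simp
  rw [hre1, inv_mul_eq_div, le_div_iff₀ hρpos] at hkey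
  have hA1 : ‖x'‖ ≤ (h (b * x')).re := by linarith
  have hbb : ‖b * (b * x)‖ ≤ K^2 := by
    have h1 : ‖b * (b * x)‖ ≤ ‖b‖ * ‖b * x‖ := norm_mul_le _ _
    have h2 : ‖b * x‖ ≤ ‖b‖ * ‖x‖ := norm_mul_le _ _
    have h3 : ‖b‖ = K := hK.symm
    nlinarith [norm_nonneg (b*x), norm_nonneg b, norm_nonneg x]
  have hre2 : -(K^2) ≤ (h (b * (b * x))).re := by
    have h1 : |(h (b * (b * x))).re| ≤ ‖h (b * (b * x))‖ := by
      exact Complex.abs_re_le_norm _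
    have h2 : ‖h (b * (b * x))‖ ≤ ‖b * (b * x)‖ := by
      calc ‖h (b * (b * x))‖ ≤ ‖h‖ * ‖b * (b * x)‖ := h.le_opNorm _
        _ = ‖b * (b * x)‖ := by rw [hh1, one_mul]
    have := abs_le.mp h1
    linarith [this.1]
  have hx'eq : b * x' = b * x - (α:ℂ) • (b * (b * x)) := by
    rw [hx', mul_sub, mul_smul_comm]
  have hre3 : (h (b * x')).re = (h (b * x)).re - α * (h (b * (b * x))).re := by
    rw [hx'eq, map_sub, map_smul, smul_eq_mul]; simp
  rw [hre3] at hA1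
  have hA2 : ‖x'‖ - α * K^2 ≤ (h (b * x)).re := by
    nlinarith [mul_nonneg hαpos.le (by linarith : (0:ℝ) ≤ (h (b * (b * x))).re + K^2)]
  have hxeq : x = x' + (α:ℂ) • (b * x) := by rw [hx', sub_add_cancel]
  have hxre : (h x).re = ‖x'‖ + α * (h (b * x)).re := by
    conv_lhs => rw [hxeq]
    rw [map_add, map_smul, smul_eq_mul, hhx']
    simp
  have hup : (h x).re ≤ 1 := by
    have h1 : (h x).re ≤ ‖h x‖ := by
      exact le_trans (le_abs_self _) (Complex.abs_re_le_norm _)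
    have h2 : ‖h x‖ ≤ ‖x‖ := by
      calc ‖h x‖ ≤ ‖h‖ * ‖x‖ := h.le_opNorm _
        _ = ‖x‖ := by rw [hh1, one_mul]
    linarith
  have hchain : ‖x'‖ * (1+α) - α^2 * K^2 ≤ 1 := by
    nlinarith [mul_le_mul_of_nonneg_left hA2 hαpos.le]
  have hprodd : (1 - α^2) * (1+α) < ‖x'‖ * (1+α) :=
    mul_lt_mul_of_pos_right hrgt (by linarith)
  have key2 : α < α * (α * (1+α+K^2)) := by nlinarith
  have t1 : α * (1+α+K^2) ≤ 1/2 := by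
    nlinarith [mul_le_mul_of_nonneg_left hα4 hαpos.le]
  have t3 : α * (α * (1+α+K^2)) ≤ α * (1/2) :=
    mul_le_mul_of_nonneg_left t1 hαpos.le
  linarith
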